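/- Let n be a positive even integer and t > 0 a real number. Then (t^{1/4} + t^{−1/4})^n + (i(t^{1/4} − t^{−1/4}))^n = 2·∑_{s=−⌊n/4⌋}^{⌊n/4⌋} C(n, n/2 + 2s)·t^{−s}, where the left-hand side is a real number (the second summand is real since n is even). -/

import Mathlib

open Finset Complex

theorem stmt15 (n : ℕ) (hn : Even n) (hpos : 0 < n) (t : ℝ) (ht : 0 < t) :
    ((t ^ ((1 : ℝ) / 4) + t ^ (-(1 : ℝ) / 4) : ℝ) : ℂ) ^ n +
        (Complex.I * ((t ^ ((1 : ℝ) / 4) - t ^ (-(1 : ℝ) / 4) : ℝ) : ℂ)) ^ n =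
      2 * ∑ s ∈ Finset.Icc (-(n / 4 : ℕ) : ℤ) ((n / 4 : ℕ) : ℤ),
        (n.choose ((n / 2 : ℕ) + 2 * s).toNat : ℂ) * (t : ℂ) ^ (-s) := by
  obtain ⟨m, hm⟩ := hn   -- n = m + m
  have htpos : (0:ℝ) < t ^ ((1:ℝ)/4) := Real.rpow_pos_of_pos ht _
  set c : ℂ := ((t ^ ((1 : ℝ) / 4) : ℝ) : ℂ) with hc_def
  have hcne : c ≠ 0 := by
    simp only [hc_def, ne_eq, Complex.ofReal_eq_zero]
    exact htpos.ne'
  have hc4 : c ^ (4:ℕ) = (t : ℂ) := by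
    rw [hc_def]
    norm_cast
    rw [← Real.rpow_natCast (t ^ ((1:ℝ)/4)) 4, ← Real.rpow_mul ht.le]
    norm_num
  have hinv : ((t ^ (-(1 : ℝ) / 4) : ℝ) : ℂ) = c⁻¹ := by
    rw [hc_def, ← Complex.ofReal_inv, neg_div, Real.rpow_neg ht.le]
  have hct : ∀ s : ℤ, c ^ ((-4) * s) = (t:ℂ) ^ (-s) := by
    intro s
    rw [show ((-4):ℤ) * s = 4 * (-s) by ring, zpow_mul, ← hc4]
    norm_cast
  -- binomial expansion
  have hb : ∀ ε : ℂ, (c + ε * c⁻¹) ^ n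
      = ∑ k ∈ range (n+1), (n.choose k : ℂ) * ε ^ (n-k) * c ^ (2*(k:ℤ) - n) := by
    intro ε
    rw [add_pow]
    refine Finset.sum_congr rfl fun k hk => ?_
    have hkn : k ≤ n := Nat.lt_succ_iff.mp (Finset.mem_range.mp hk)
    rw [mul_pow, inv_pow, ← zpow_natCast c k, ← zpow_natCast c (n-k), ← zpow_neg,
      mul_left_comm (c ^ (k:ℤ)), ← zpow_add₀ hcne]
    have : (k:ℤ) + -((n-k:ℕ):ℤ) = 2*(k:ℤ) - n := by
      push_cast [Nat.cast_sub hkn]; ring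
    rw [this]; ring
  have hI : (Complex.I) ^ n = (-1:ℂ) ^ m := by
    rw [hm, pow_add, ← mul_pow, Complex.I_mul_I]
  have hm2 : n / 2 = m := by omega
  rw [Complex.ofReal_add, Complex.ofReal_sub, hinv, hm2]
  have hL : (c + c⁻¹) ^ n + (Complex.I * (c - c⁻¹)) ^ n
      = ∑ k ∈ range (n+1),
          (if (m + k) % 2 = 0 then 2 * (n.choose k : ℂ) * c ^ (2*(k:ℤ) - n) else 0) := by
    rw [mul_pow, hI, show c - c⁻¹ = c + (-1) * c⁻¹ by ring,
      show c + c⁻¹ = c + 1 * c⁻¹ by ring, hb 1, hb (-1), Finset.mul_sum,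
      ← Finset.sum_add_distrib]
    refine Finset.sum_congr rfl fun k hk => ?_
    have hkn : k ≤ n := Nat.lt_succ_iff.mp (Finset.mem_range.mp hk)
    have key : (n.choose k : ℂ) * 1 ^ (n-k) * c ^ (2*(k:ℤ)-n)
        + (-1:ℂ)^m * ((n.choose k : ℂ) * (-1) ^ (n-k) * c ^ (2*(k:ℤ)-n))
        = (1 + (-1:ℂ)^(m+(n-k))) * ((n.choose k : ℂ) * c ^ (2*(k:ℤ)-n)) := by
      rw [pow_add]; ring
    rw [key]
    rcases Nat.even_or_odd (m+k) with h | h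
    · have h2 : Even (m + (n-k)) := by
        rw [Nat.even_iff] at h ⊢; omega
      rw [if_pos (Nat.even_iff.mp h), h2.neg_one_pow]; ring
    · have h2 : Odd (m + (n-k)) := by
        rw [Nat.odd_iff] at h ⊢; omega
      rw [if_neg (by rw [← Nat.even_iff]; exact (Nat.not_even_iff_odd.mpr h)), h2.neg_one_pow]
      ring
  rw [hL, ← Finset.sum_filter, Finset.mul_sum]
  refine Finset.sum_nbij' (fun k => ((m:ℤ) - k)/2) (fun s => ((m:ℤ) - 2*s).toNat)
    ?_ ?_ ?_ ?_ ?_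
  · intro k hk
    simp only [Finset.mem_filter, Finset.mem_range] at hk
    simp only [Finset.mem_Icc]
    omega
  · intro s hs
    simp only [Finset.mem_Icc] at hs
    simp only [Finset.mem_filter, Finset.mem_range]
    omega
  · intro k hk
    simp only [Finset.mem_filter, Finset.mem_range] at hk
    omega
  · intro s hs
    simp only [Finset.mem_Icc] at hs
    omega
  · intro k hk
    simp only [Finset.mem_filter, Finset.mem_range] at hk
    set s : ℤ := ((m:ℤ) - k)/2 with hs_def
    have h1 : ((m:ℤ) + 2*s).toNat = n - k := by omega
    have h2 : 2*(k:ℤ) - n = -4 * s := by omega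
    rw [h1, Nat.choose_symm (by omega), h2, hct]
    ring
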